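/- Let X be a compact metric space and T : X → X a continuous minimal map (every forward orbit {Tⁿ(x) : n ∈ ℕ} is dense in X). Let β ∈ ℝ and let ρ : X → ℂ be continuous. If there exist a point x₀ ∈ X and a constant C ≥ 0 such that the twisted Birkhoff sums satisfy |Σ_{k=0}^{n−1} e^{−ikβ} ρ(T^k(x₀))| ≤ C for all n ∈ ℕ, then the twisted cohomological equation φ(T(x)) − e^{iβ} φ(x) = ρ(x) has a continuous solution φ : X → ℂ. -/

import Mathlib

open Complex MeasureTheory

namespace TwGH

/-- raw multiplication on pairs `(c, c')`, representing composition of the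
maps `(t, z) ↦ (t + c' z, c z)` (first argument applied first). -/
def rmul (g h : ℂ × ℂ) : ℂ × ℂ := (g.1 * h.1, g.2 + h.2 * g.1)

/-- raw inverse. -/
def rinv (g : ℂ × ℂ) : ℂ × ℂ := ((starRingEnd ℂ) g.1, -g.2 * (starRingEnd ℂ) g.1)

/-- carrier of the ambient group: pairs `(c, c')` with `|c| = 1`. -/
def circ : Set (ℂ × ℂ) := {q | ‖q.1‖ = 1}

lemma conj_mul_self {a : ℂ} (ha : ‖a‖ = 1) : (starRingEnd ℂ) a * a = 1 := by
  rw [mul_comm, Complex.mul_conj, ← Complex.sq_norm, ha]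
  norm_num

lemma rmul_mem {g h : ℂ × ℂ} (hg : g ∈ circ) (hh : h ∈ circ) : rmul g h ∈ circ := by
  simp only [circ, Set.mem_setOf_eq, rmul, norm_mul] at *
  rw [hg, hh]; norm_num

lemma rinv_mem {g : ℂ × ℂ} (hg : g ∈ circ) : rinv g ∈ circ := by
  simp only [circ, Set.mem_setOf_eq, rinv] at *
  simpa using hg

noncomputable instance : Group circ where
  one := ⟨(1, 0), by simp [circ]⟩
  mul g h := ⟨rmul g.1 h.1, rmul_mem g.2 h.2⟩
  inv g := ⟨rinv g.1, rinv_mem g.2⟩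
  mul_assoc a b c := by
    apply Subtype.ext
    show rmul (rmul a.1 b.1) c.1 = rmul a.1 (rmul b.1 c.1)
    simp only [rmul, Prod.mk.injEq]
    constructor <;> ring
  one_mul a := by
    apply Subtype.ext
    show rmul (1, 0) a.1 = a.1
    simp [rmul]
  mul_one a := by
    apply Subtype.ext
    show rmul a.1 (1, 0) = a.1
    simp [rmul]
  inv_mul_cancel a := by
    apply Subtype.ext
    show rmul (rinv a.1) a.1 = (1, 0)
    have ha := a.2
    simp only [circ, Set.mem_setOf_eq] at ha
    simp only [rmul, rinv, Prod.mk.injEq]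
    constructor
    · exact conj_mul_self ha
    · ring

lemma mul_val (a b : circ) : (↑(a * b) : ℂ × ℂ) = rmul a.1 b.1 := rfl

lemma one_val : ((1 : circ) : ℂ × ℂ) = (1, 0) := rfl

lemma inv_val (a : circ) : (↑(a⁻¹) : ℂ × ℂ) = rinv a.1 := rfl

noncomputable instance : IsTopologicalGroup circ where
  continuous_mul := by
    apply continuous_induced_rng.mpr
    show Continuous fun p : circ × circ => rmul p.1.1 p.2.1
    unfold rmul
    fun_prop
  continuous_inv := by
    apply continuous_induced_rng.mpr
    show Continuous fun a : circ => rinv a.1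
    unfold rinv
    have h1 : Continuous fun a : circ => (starRingEnd ℂ) a.1.1 :=
      Complex.continuous_conj.comp (continuous_fst.comp continuous_subtype_val)
    exact h1.prodMk (((continuous_snd.comp continuous_subtype_val).neg).mul h1)

noncomputable instance : MeasurableSpace circ := borel _
instance : BorelSpace circ := ⟨rfl⟩

theorem exists_v (H : Subgroup circ) (hc : IsCompact (H : Set circ)) :
    ∃ v : ℂ, ∀ g : circ, g ∈ H → (g : ℂ × ℂ).2 = v * (1 - (g : ℂ × ℂ).1) := by
  haveI : CompactSpace H := isCompact_iff_compactSpace.mp hc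
  letI : MeasurableSpace H := borel _
  haveI : BorelSpace H := ⟨rfl⟩
  haveI : Nonempty H := ⟨1⟩
  set μ : Measure H := Measure.haarMeasure ⊤ with hμ
  have huniv : μ Set.univ = 1 := by
    have := Measure.haarMeasure_self (K₀ := (⊤ : TopologicalSpace.PositiveCompacts H))
    rwa [TopologicalSpace.PositiveCompacts.coe_top] at this
  haveI : IsFiniteMeasure μ := ⟨by rw [huniv]; exact ENNReal.one_lt_top⟩
  set f : H → ℂ := fun g => ((g : circ) : ℂ × ℂ).2 with hf
  have hfc : Continuous f := by
    apply Continuous.comp continuous_snd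
    exact continuous_subtype_val.comp continuous_subtype_val
  have hfi : Integrable f μ :=
    hfc.integrable_of_hasCompactSupport (HasCompactSupport.of_compactSpace f)
  set v : ℂ := ∫ g, f g ∂μ with hv
  refine ⟨v, ?_⟩
  intro g hg
  have key : ∫ x, f ((⟨g, hg⟩ : H) * x) ∂μ = ∫ x, f x ∂μ :=
    integral_mul_left_eq_self f _
  have hexp : ∀ x : H, f ((⟨g, hg⟩ : H) * x)
      = (g : ℂ × ℂ).2 + f x * (g : ℂ × ℂ).1 := by
    intro x; rfl
  rw [integral_congr_ae (Filter.Eventually.of_forall hexp)] at key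
  rw [integral_add (integrable_const _) (hfi.mul_const _)] at key
  rw [integral_const, integral_mul_const] at key
  have hre : μ.real Set.univ = 1 := by simp [Measure.real, huniv]
  rw [hre] at key
  simp only [one_smul] at key
  rw [hv]
  linear_combination key

lemma rmul_rinv {q : ℂ × ℂ} (h : q ∈ circ) : rmul q (rinv q) = (1, 0) := by
  have hc : (starRingEnd ℂ) q.1 * q.1 = 1 := conj_mul_self h
  simp only [rmul, rinv, Prod.mk.injEq]
  constructor
  · linear_combination hc
  · linear_combination (-q.2) * hc

lemma rinv_rinv {q : ℂ × ℂ} (h : q ∈ circ) : rinv (rinv q) = q := by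
  have hc : (starRingEnd ℂ) q.1 * q.1 = 1 := conj_mul_self h
  refine Prod.ext ?_ ?_
  · simp [rinv]
  · show -(-q.2 * (starRingEnd ℂ) q.1) * (starRingEnd ℂ) ((starRingEnd ℂ) q.1) = q.2
    rw [Complex.conj_conj]
    linear_combination q.2 * hc

end TwGH

/-- Bounded twisted Birkhoff sums at one point imply that the twisted cohomological equation
`φ ∘ T - e^{iβ} φ = ρ` has a continuous solution, for a minimal continuous map `T`. -/
theorem twisted_cohomological_equation_continuous_solution
    {X : Type*} [MetricSpace X] [CompactSpace X]
    (T : X → X) (hT_cont : Continuous T)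
    (hmin : ∀ x, Dense (Set.range fun n : ℕ => T^[n] x))
    (β : ℝ) (ρ : X → ℂ) (hρ : Continuous ρ)
    (x₀ : X) (C : ℝ) (hC : 0 ≤ C)
    (hbound : ∀ n : ℕ,
      ‖∑ k ∈ Finset.range n,
        Complex.exp (-((k : ℂ) * (β : ℂ)) * Complex.I) * ρ (T^[k] x₀)‖ ≤ C) :
    ∃ φ : X → ℂ, Continuous φ ∧
      ∀ x, φ (T x) - Complex.exp ((β : ℂ) * Complex.I) * φ x = ρ x := by
  classical
  set e : ℂ := Complex.exp ((β : ℂ) * Complex.I) with he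
  set F : X × ℂ × ℂ → X × ℂ × ℂ :=
    fun p => (T p.1, e * p.2.1 + ρ p.1, e * p.2.2) with hF
  set U : ℂ × ℂ → X × ℂ × ℂ → X × ℂ × ℂ :=
    fun q p => (p.1, p.2.1 + q.2 * p.2.2, q.1 * p.2.2) with hU
  have hFc : Continuous F := by
    refine (hT_cont.comp continuous_fst).prodMk (Continuous.prodMk ?_ ?_)
    · exact (continuous_const.mul (continuous_fst.comp continuous_snd)).add
        (hρ.comp continuous_fst)
    · exact continuous_const.mul (continuous_snd.comp continuous_snd)
  have hUc : ∀ q, Continuous (U q) := by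
    intro q
    refine continuous_fst.prodMk (Continuous.prodMk ?_ ?_)
    · exact (continuous_fst.comp continuous_snd).add
        (continuous_const.mul (continuous_snd.comp continuous_snd))
    · exact continuous_const.mul (continuous_snd.comp continuous_snd)
  have hUqc : ∀ p : X × ℂ × ℂ, Continuous fun q : ℂ × ℂ => U q p := by
    intro p
    refine continuous_const.prodMk (Continuous.prodMk ?_ ?_)
    · exact continuous_const.add (continuous_snd.mul continuous_const)
    · exact continuous_fst.mul continuous_const
  have hcomm : ∀ q p, F (U q p) = U q (F p) := by
    intro q p
    simp only [hF, hU]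
    refine Prod.ext rfl (Prod.ext ?_ ?_) <;> dsimp <;> ring
  have hUU : ∀ q r p, U r (U q p) = U (TwGH.rmul q r) p := by
    intro q r p
    simp only [hU, TwGH.rmul]
    refine Prod.ext rfl (Prod.ext ?_ ?_) <;> dsimp <;> ring
  have hU1 : ∀ p, U ((1 : ℂ), (0 : ℂ)) p = p := by
    intro p
    simp only [hU]
    refine Prod.ext rfl (Prod.ext ?_ ?_) <;> dsimp <;> ring
  -- absolute values of the exponentials
  have habsE : ∀ r : ℝ, ‖Complex.exp ((r : ℂ) * Complex.I)‖ = 1 := by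
    intro r; rw [Complex.norm_exp]; simp
  have habsn : ∀ n : ℕ, ‖Complex.exp ((n : ℂ) * (β : ℂ) * Complex.I)‖ = 1 := by
    intro n
    rw [show ((n : ℂ) * (β : ℂ) * Complex.I) = (((n * β : ℝ)) : ℂ) * Complex.I by
      push_cast; ring]
    exact habsE _
  have habse' : ‖Complex.exp (-(β : ℂ) * Complex.I)‖ = 1 := by
    rw [show (-(β : ℂ) * Complex.I) = (((-β : ℝ)) : ℂ) * Complex.I by push_cast; ring]
    exact habsE _
  -- the orbit formula
  set p₀ : X × ℂ × ℂ := (x₀, 0, 1) with hp₀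
  have key : ∀ n : ℕ, F^[n] p₀ =
      (T^[n] x₀,
       Complex.exp ((n : ℂ) * (β : ℂ) * Complex.I) * (Complex.exp (-(β : ℂ) * Complex.I) *
         ∑ k ∈ Finset.range n, Complex.exp (-((k : ℂ) * (β : ℂ)) * Complex.I) * ρ (T^[k] x₀)),
       Complex.exp ((n : ℂ) * (β : ℂ) * Complex.I)) := by
    intro n
    induction n with
    | zero => simp [hp₀]
    | succ n ih =>
      rw [Function.iterate_succ_apply', ih, Function.iterate_succ_apply' T,
        Finset.sum_range_succ]
      have h1 : Complex.exp (((n + 1 : ℕ) : ℂ) * (β : ℂ) * Complex.I)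
          = e * Complex.exp ((n : ℂ) * (β : ℂ) * Complex.I) := by
        rw [he, ← Complex.exp_add]; congr 1; push_cast; ring
      have h2 : e * Complex.exp (-(β : ℂ) * Complex.I) = 1 := by
        rw [he, ← Complex.exp_add,
          show (β : ℂ) * Complex.I + -(β : ℂ) * Complex.I = 0 by ring, Complex.exp_zero]
      have h3 : Complex.exp ((n : ℂ) * (β : ℂ) * Complex.I)
          * Complex.exp (-((n : ℂ) * (β : ℂ)) * Complex.I) = 1 := by
        rw [← Complex.exp_add,
          show (n : ℂ) * (β : ℂ) * Complex.I + -((n : ℂ) * (β : ℂ)) * Complex.I = 0 by ring,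
          Complex.exp_zero]
      simp only [hF]
      refine Prod.ext rfl (Prod.ext ?_ ?_) <;> dsimp
      · rw [h1]
        linear_combination (-(ρ (T^[n] x₀)) * Complex.exp ((n : ℂ) * (β : ℂ) * Complex.I)
            * Complex.exp (-((n : ℂ) * (β : ℂ)) * Complex.I)) * h2
          + (-(ρ (T^[n] x₀))) * h3
      · rw [h1]
  -- the orbit closure is a compact invariant set
  set K : Set (X × ℂ × ℂ) := closure (Set.range fun n => F^[n] p₀) with hK
  have hKbox : K ⊆ Set.univ ×ˢ (Metric.closedBall 0 C ×ˢ Metric.sphere (0 : ℂ) 1) := by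
    apply closure_minimal
    · rintro p ⟨n, rfl⟩
      dsimp only
      rw [key n]
      refine ⟨trivial, ?_, ?_⟩
      · simp only [Metric.mem_closedBall, Complex.dist_eq, sub_zero, norm_mul,
          habsn n, habse', one_mul]
        exact hbound n
      · simp only [Metric.mem_sphere, Complex.dist_eq, sub_zero]
        exact habsn n
    · exact isClosed_univ.prod ((Metric.isClosed_closedBall).prod (Metric.isClosed_sphere))
  have hKc : IsCompact K :=
    IsCompact.of_isClosed_subset
      ((isCompact_univ).prod ((isCompact_closedBall _ _).prod (isCompact_sphere _ _)))
      isClosed_closure hKbox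
  have hKmap : Set.MapsTo F K K := by
    have h : F '' K ⊆ K := by
      calc F '' closure (Set.range fun n => F^[n] p₀)
          ⊆ closure (F '' Set.range fun n => F^[n] p₀) :=
            image_closure_subset_closure_image hFc
        _ ⊆ closure (Set.range fun n => F^[n] p₀) := by
            apply closure_mono
            rintro q ⟨p, ⟨n, rfl⟩, rfl⟩
            refine ⟨n + 1, ?_⟩
            simp [Function.iterate_succ_apply']
    exact fun p hp => h ⟨p, hp, rfl⟩
  have hKne : K.Nonempty := ⟨p₀, subset_closure ⟨0, rfl⟩⟩
  -- Zorn: a minimal nonempty closed invariant subset M of K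
  set Scoll : Set (Set (X × ℂ × ℂ)) :=
    {s | s.Nonempty ∧ IsClosed s ∧ Set.MapsTo F s s ∧ s ⊆ K} with hScoll
  have hchain : ∀ c ⊆ Scoll, IsChain (· ⊆ ·) c → c.Nonempty →
      ∃ lb ∈ Scoll, ∀ s ∈ c, lb ⊆ s := by
    intro c hcS hch hcne
    refine ⟨⋂₀ c, ⟨?_, ?_, ?_, ?_⟩, fun s hs => Set.sInter_subset_of_mem hs⟩
    · haveI : Nonempty c := hcne.to_subtype
      have hdir : DirectedOn (· ⊇ ·) c := by
        intro a ha b hb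
        rcases eq_or_ne a b with rfl | hne
        · exact ⟨a, ha, Set.Subset.refl a, Set.Subset.refl a⟩
        · rcases hch ha hb hne with h | h
          · exact ⟨a, ha, Set.Subset.refl a, h⟩
          · exact ⟨b, hb, h, Set.Subset.refl b⟩
      exact IsCompact.nonempty_sInter_of_directed_nonempty_isCompact_isClosed
        hdir (fun s hs => (hcS hs).1)
        (fun s hs => hKc.of_isClosed_subset (hcS hs).2.1 (hcS hs).2.2.2)
        (fun s hs => (hcS hs).2.1)
    · exact isClosed_sInter fun s hs => (hcS hs).2.1
    · intro p hp
      exact Set.mem_sInter.mpr fun s hs => (hcS hs).2.2.1 (Set.mem_sInter.mp hp s hs)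
    · obtain ⟨s₀, hs₀⟩ := hcne
      exact (Set.sInter_subset_of_mem hs₀).trans (hcS hs₀).2.2.2
  obtain ⟨M, hMK, hMmin⟩ :=
    zorn_superset_nonempty Scoll hchain K ⟨hKne, isClosed_closure, hKmap, le_refl K⟩
  obtain ⟨hMne, hMcl, hMmap, hMsubK⟩ := hMmin.1
  have hmin_eq : ∀ N, N ⊆ M → N.Nonempty → IsClosed N → Set.MapsTo F N N → N = M := by
    intro N hNM hNne hNcl hNmap
    exact Set.Subset.antisymm hNM (hMmin.2 ⟨hNne, hNcl, hNmap, hNM.trans hMsubK⟩ hNM)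
  have hMcomp : IsCompact M := hKc.of_isClosed_subset hMcl hMsubK
  -- coordinate bounds on M
  have hMbox : ∀ p ∈ M, ‖p.2.1‖ ≤ C ∧ ‖p.2.2‖ = 1 := by
    intro p hp
    obtain ⟨-, hA, hB⟩ := hKbox (hMsubK hp)
    constructor
    · simpa [Complex.dist_eq] using hA
    · simpa [Complex.dist_eq] using hB
  -- M projects onto X
  have hfst_iter : ∀ (n : ℕ) (p : X × ℂ × ℂ), (F^[n] p).1 = T^[n] p.1 := by
    intro n
    induction n with
    | zero => intro p; rfl
    | succ n ih =>
      intro p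
      rw [Function.iterate_succ_apply' F, Function.iterate_succ_apply' T, ← ih p]
  have hMiter : ∀ (n : ℕ) p, p ∈ M → F^[n] p ∈ M := by
    intro n
    induction n with
    | zero => intro p hp; exact hp
    | succ n ih =>
      intro p hp
      rw [Function.iterate_succ_apply' F]
      exact hMmap (ih p hp)
  have hproj : ∀ x : X, ∃ t z : ℂ, (x, t, z) ∈ M := by
    obtain ⟨p₁, hp₁⟩ := hMne
    have hScl : IsClosed (Prod.fst '' M) := (hMcomp.image continuous_fst).isClosed
    have horb : ∀ n : ℕ, T^[n] p₁.1 ∈ Prod.fst '' M :=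
      fun n => ⟨F^[n] p₁, hMiter n _ hp₁, hfst_iter n p₁⟩
    have hall : ∀ x : X, x ∈ Prod.fst '' M := by
      intro x
      have h := closure_minimal (Set.range_subset_iff.mpr horb) hScl
      rw [(hmin p₁.1).closure_eq] at h
      exact h trivial
    intro x
    obtain ⟨⟨px, pt, pz⟩, hpM, rfl⟩ := hall x
    exact ⟨pt, pz, hpM⟩
  -- minimality upgrades
  have hUMsub_eq : ∀ q : ℂ × ℂ, (∀ p ∈ M, U q p ∈ M) → U q '' M = M := by
    intro q hq
    apply hmin_eq
    · exact Set.image_subset_iff.mpr hq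
    · exact hMne.image _
    · exact (hMcomp.image (hUc q)).isClosed
    · rintro _ ⟨p, hp, rfl⟩
      rw [hcomm q p]
      exact ⟨F p, hMmap hp, rfl⟩
  have hinv_mem : ∀ q ∈ TwGH.circ, (∀ p ∈ M, U q p ∈ M) →
      ∀ p ∈ M, U (TwGH.rinv q) p ∈ M := by
    intro q hqcirc hq p hp
    rw [← hUMsub_eq q hq] at hp
    obtain ⟨p', hp', rfl⟩ := hp
    rw [hUU, TwGH.rmul_rinv hqcirc, hU1]
    exact hp'
  have htrans : ∀ x t₁ z₁ t₂ z₂, (x, t₁, z₁) ∈ M → (x, t₂, z₂) ∈ M →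
      ∀ p ∈ M, U (z₂ * (starRingEnd ℂ) z₁, (t₂ - t₁) * (starRingEnd ℂ) z₁) p ∈ M := by
    intro x t₁ z₁ t₂ z₂ h1 h2
    set q : ℂ × ℂ := (z₂ * (starRingEnd ℂ) z₁, (t₂ - t₁) * (starRingEnd ℂ) z₁) with hq
    have hz₁ : ‖z₁‖ = 1 := (hMbox _ h1).2
    have hz₂ : ‖z₂‖ = 1 := (hMbox _ h2).2
    have hqcirc : q ∈ TwGH.circ := by
      show ‖q.1‖ = 1
      rw [hq]
      simp [map_mul, hz₁, hz₂]
    have hc1 : (starRingEnd ℂ) z₁ * z₁ = 1 := TwGH.conj_mul_self hz₁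
    have hUp : U q (x, t₁, z₁) = (x, t₂, z₂) := by
      simp only [hU, hq]
      refine Prod.ext rfl (Prod.ext ?_ ?_) <;> dsimp
      · linear_combination (t₂ - t₁) * hc1
      · linear_combination z₂ * hc1
    have hNeq : M ∩ (U q '' M) = M := by
      apply hmin_eq
      · exact Set.inter_subset_left
      · exact ⟨(x, t₂, z₂), h2, ⟨(x, t₁, z₁), h1, hUp⟩⟩
      · exact hMcl.inter (hMcomp.image (hUc q)).isClosed
      · rintro p ⟨hpM, ⟨p', hp', rfl⟩⟩
        refine ⟨hMmap hpM, ⟨F p', hMmap hp', (hcomm q p').symm⟩⟩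
    have hqinv : ∀ p ∈ M, U (TwGH.rinv q) p ∈ M := by
      intro p hp
      have hp2 : p ∈ M ∩ (U q '' M) := hNeq.symm ▸ hp
      obtain ⟨p', hp', rfl⟩ := hp2.2
      rw [hUU, TwGH.rmul_rinv hqcirc, hU1]
      exact hp'
    have hres := hinv_mem (TwGH.rinv q) (TwGH.rinv_mem hqcirc) hqinv
    rwa [TwGH.rinv_rinv hqcirc] at hres
  -- the compact group of symmetries
  set Hsub : Subgroup ↥TwGH.circ :=
    { carrier := {g : ↥TwGH.circ | ∀ p ∈ M, U g.1 p ∈ M}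
      mul_mem' := by
        intro a b ha hb p hp
        rw [show ((a * b : ↥TwGH.circ) : ℂ × ℂ) = TwGH.rmul a.1 b.1 from rfl, ← hUU]
        exact hb _ (ha _ hp)
      one_mem' := by
        intro p hp
        rw [show ((1 : ↥TwGH.circ) : ℂ × ℂ) = ((1 : ℂ), (0 : ℂ)) from rfl, hU1]
        exact hp
      inv_mem' := by
        intro a ha p hp
        rw [show ((a⁻¹ : ↥TwGH.circ) : ℂ × ℂ) = TwGH.rinv a.1 from rfl]
        exact hinv_mem a.1 a.2 ha p hp } with hHsub
  have hHcomp : IsCompact (Hsub : Set ↥TwGH.circ) := by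
    rw [Topology.IsEmbedding.subtypeVal.isCompact_iff]
    have himeq : Subtype.val '' (Hsub : Set ↥TwGH.circ)
        = {q : ℂ × ℂ | ‖q.1‖ = 1} ∩ {q : ℂ × ℂ | ∀ p ∈ M, U q p ∈ M} := by
      ext q
      constructor
      · rintro ⟨g, hg, rfl⟩
        exact ⟨g.2, hg⟩
      · rintro ⟨h1, h2⟩
        exact ⟨⟨q, h1⟩, h2, rfl⟩
    rw [himeq]
    apply IsCompact.of_isClosed_subset
      ((isCompact_closedBall (0 : ℂ) 1).prod (isCompact_closedBall (0 : ℂ) (2 * C)))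
    · apply IsClosed.inter
      · exact isClosed_eq (continuous_norm.comp continuous_fst) continuous_const
      · have hset : {q : ℂ × ℂ | ∀ p ∈ M, U q p ∈ M} = ⋂ p ∈ M, {q : ℂ × ℂ | U q p ∈ M} := by
          ext q; simp
        rw [hset]
        exact isClosed_biInter fun p hp => IsClosed.preimage (hUqc p) hMcl
    · rintro q ⟨h1, h2⟩
      obtain ⟨p₁, hp₁⟩ := hMne
      have hbp := hMbox _ hp₁
      have hbq := (hMbox _ (h2 _ hp₁)).1
      have hUval : (U q p₁).2.1 = p₁.2.1 + q.2 * p₁.2.2 := rfl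
      rw [hUval] at hbq
      constructor
      · simp only [Set.mem_setOf_eq, Metric.mem_closedBall, Complex.dist_eq, sub_zero]
        rw [h1]
      · simp only [Set.mem_setOf_eq, Metric.mem_closedBall, Complex.dist_eq, sub_zero]
        have h3 : ‖q.2 * p₁.2.2‖ = ‖q.2‖ := by
          rw [norm_mul, hbp.2, mul_one]
        calc ‖q.2‖ = ‖q.2 * p₁.2.2‖ := h3.symm
          _ = ‖(p₁.2.1 + q.2 * p₁.2.2) - p₁.2.1‖ := by
              rw [add_sub_cancel_left]
          _ ≤ ‖p₁.2.1 + q.2 * p₁.2.2‖ + ‖p₁.2.1‖ := by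
              exact
                norm_sub_le (p₁.2.1 + q.2 * p₁.2.2) p₁.2.1
          _ ≤ C + C := add_le_add hbq hbp.1
          _ = 2 * C := by ring
  obtain ⟨v, hv⟩ := TwGH.exists_v Hsub hHcomp
  -- well-definedness of the solution
  have hwd : ∀ x t z t' z', (x, t, z) ∈ M → (x, t', z') ∈ M → t + v * z = t' + v * z' := by
    intro x t z t' z' h1 h2
    have hz : ‖z‖ = 1 := (hMbox _ h1).2
    have hc : (starRingEnd ℂ) z * z = 1 := TwGH.conj_mul_self hz
    have hmem := htrans x t z t' z' h1 h2
    have habsq : ‖z' * (starRingEnd ℂ) z‖ = 1 := by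
      rw [norm_mul, (hMbox _ h2).2]
      simp [hz]
    have hgmem : (⟨(z' * (starRingEnd ℂ) z, (t' - t) * (starRingEnd ℂ) z), habsq⟩ :
        ↥TwGH.circ) ∈ Hsub := hmem
    have hveq := hv _ hgmem
    simp only at hveq
    linear_combination (-z) * hveq + (t' - t + v * z') * hc
  -- the solution
  choose tf zf hmemM using hproj
  set φ : X → ℂ := fun x => tf x + v * zf x with hφ
  have hφeq : ∀ x t z, (x, t, z) ∈ M → φ x = t + v * z :=
    fun x t z h => hwd x (tf x) (zf x) t z (hmemM x) h
  have heqn : ∀ x, φ (T x) - e * φ x = ρ x := by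
    intro x
    have h1 : F (x, tf x, zf x) ∈ M := hMmap (hmemM x)
    have h2 : φ (T x) = (e * tf x + ρ x) + v * (e * zf x) := hφeq (T x) _ _ h1
    rw [h2, hφ]
    dsimp
    ring
  have hcont : Continuous φ := by
    rw [continuous_iff_isClosed]
    intro s hs
    have himg : φ ⁻¹' s = Prod.fst '' (M ∩ {p : X × ℂ × ℂ | p.2.1 + v * p.2.2 ∈ s}) := by
      ext x
      constructor
      · intro hx
        exact ⟨(x, tf x, zf x), ⟨hmemM x, hx⟩, rfl⟩
      · rintro ⟨⟨px, pt, pz⟩, ⟨hpM, hps⟩, rfl⟩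
        show φ px ∈ s
        rw [hφeq px pt pz hpM]
        exact hps
    rw [himg]
    apply IsCompact.isClosed
    apply IsCompact.image _ continuous_fst
    exact hMcomp.inter_right (IsClosed.preimage (by fun_prop) hs)
  exact ⟨φ, hcont, heqn⟩
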